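/- Let H = [[Q_uu, Q_uv],[Q_vu, Q_vv]] be symmetric positive definite (so Q_vu = Q_uvᵀ). Fix δx ∈ ℝⁿ and δx_r ∈ ℝʳ. Then the joint quadratic (δu, δv) ↦ Q_uᵀδu + Q_vᵀδv + ½[δu;δv]ᵀ H [δu;δv] + δuᵀ(Q_ux δx + Q_{u x_r} δx_r) + δvᵀ(Q_vx δx + Q_{v x_r} δx_r) has a unique minimizer (δu*, δv*), given by δu* = k̃ + K̃ δx + G̃ δx_r and δv* = Ĩ + H̃ δx + L̃ δx_r, where Q̃_uu = Q_uu − Q_uv Q_vv⁻¹ Q_vu, Q̃_vv = Q_vv − Q_vu Q_uu⁻¹ Q_uv, k̃ = −Q̃_uu⁻¹(Q_u − Q_uv Q_vv⁻¹ Q_v), K̃ = −Q̃_uu⁻¹(Q_ux − Q_uv Q_vv⁻¹ Q_vx), G̃ = −Q̃_uu⁻¹(Q_{u x_r} − Q_uv Q_vv⁻¹ Q_{v x_r}), Ĩ = −Q̃_vv⁻¹(Q_v − Q_vu Q_uu⁻¹ Q_u), H̃ = −Q̃_vv⁻¹(Q_vx − Q_vu Q_uu⁻¹ Q_ux), and L̃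 = −Q̃_vv⁻¹(Q_{v x_r} − Q_vu Q_uu⁻¹ Q_{u x_r}). -/

import Mathlib

open Matrix

section CoopAux

set_option linter.unusedSectionVars false

variable {M P : Type*} [Fintype M] [Fintype P] [DecidableEq M] [DecidableEq P]

/-- Strict minimization of a quadratic with positive definite Hessian. -/
lemma coop_quad_strict_min {N : Type*} [Fintype N] {H : Matrix N N ℝ} (hH : H.PosDef)
    (a zs z : N → ℝ) (hzs : H *ᵥ zs = -a) (hne : z ≠ zs) :
    a ⬝ᵥ zs + (1/2) * (zs ⬝ᵥ (H *ᵥ zs)) < a ⬝ᵥ z + (1/2) * (z ⬝ᵥ (H *ᵥ z)) := by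
  have hd : z - zs ≠ 0 := sub_ne_zero.mpr hne
  have hpos : 0 < (z - zs) ⬝ᵥ (H *ᵥ (z - zs)) := by
    simpa using hH.dotProduct_mulVec_pos hd
  have hT : Hᵀ = H := by
    have := hH.1
    rwa [Matrix.IsHermitian, conjTranspose_eq_transpose_of_trivial] at this
  have hsym : ∀ u v : N → ℝ, u ⬝ᵥ (H *ᵥ v) = v ⬝ᵥ (H *ᵥ u) := by
    intro u v
    rw [dotProduct_mulVec, ← mulVec_transpose, hT, dotProduct_comm]
  have h1 : z ⬝ᵥ (H *ᵥ zs) = -(a ⬝ᵥ z) := by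
    rw [hzs, dotProduct_neg, dotProduct_comm]
  have h2 : zs ⬝ᵥ (H *ᵥ z) = -(a ⬝ᵥ z) := by rw [hsym]; exact h1
  have h3 : zs ⬝ᵥ (H *ᵥ zs) = -(a ⬝ᵥ zs) := by
    rw [hzs, dotProduct_neg, dotProduct_comm]
  have hexp : (z - zs) ⬝ᵥ (H *ᵥ (z - zs))
      = z ⬝ᵥ (H *ᵥ z) - z ⬝ᵥ (H *ᵥ zs) - zs ⬝ᵥ (H *ᵥ z) + zs ⬝ᵥ (H *ᵥ zs) := by
    simp [mulVec_sub, dotProduct_sub, sub_dotProduct]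
    ring
  rw [hexp, h1, h2, h3] at hpos
  linarith

lemma coop_schur_eq (A : Matrix M M ℝ) (B : Matrix M P ℝ) (C : Matrix P M ℝ) (D : Matrix P P ℝ)
    [Invertible A] [Invertible D] :
    B * D⁻¹ * (D - C * A⁻¹ * B) = (A - B * D⁻¹ * C) * (A⁻¹ * B) := by
  rw [Matrix.mul_sub, Matrix.sub_mul, Matrix.inv_mul_cancel_right_of_invertible,
    Matrix.mul_inv_cancel_left_of_invertible]
  simp only [Matrix.mul_assoc]

lemma coop_schur_I2 (A : Matrix M M ℝ) (B : Matrix M P ℝ) (C : Matrix P M ℝ) (D : Matrix P P ℝ)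
    [Invertible A] [Invertible D]
    [Invertible (A - B * D⁻¹ * C)] [Invertible (D - C * A⁻¹ * B)] :
    B * (D - C * A⁻¹ * B)⁻¹ = A * ((A - B * D⁻¹ * C)⁻¹ * (B * D⁻¹)) := by
  have h1 : (A - B * D⁻¹ * C) * (A⁻¹ * (B * (D - C * A⁻¹ * B)⁻¹)) = B * D⁻¹ := by
    calc (A - B * D⁻¹ * C) * (A⁻¹ * (B * (D - C * A⁻¹ * B)⁻¹))
        = ((A - B * D⁻¹ * C) * (A⁻¹ * B)) * (D - C * A⁻¹ * B)⁻¹ := by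
          simp only [Matrix.mul_assoc]
      _ = (B * D⁻¹ * (D - C * A⁻¹ * B)) * (D - C * A⁻¹ * B)⁻¹ := by rw [coop_schur_eq]
      _ = B * D⁻¹ := by rw [Matrix.mul_inv_cancel_right_of_invertible]
  have h4 : (A - B * D⁻¹ * C)⁻¹ * (B * D⁻¹) = A⁻¹ * (B * (D - C * A⁻¹ * B)⁻¹) := by
    calc (A - B * D⁻¹ * C)⁻¹ * (B * D⁻¹)
        = (A - B * D⁻¹ * C)⁻¹ * ((A - B * D⁻¹ * C) * (A⁻¹ * (B * (D - C * A⁻¹ * B)⁻¹))) :=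
          congrArg _ h1.symm
      _ = A⁻¹ * (B * (D - C * A⁻¹ * B)⁻¹) := by
          rw [Matrix.inv_mul_cancel_left_of_invertible]
  rw [h4, Matrix.mul_inv_cancel_left_of_invertible]

lemma coop_schur_I1 (A : Matrix M M ℝ) (B : Matrix M P ℝ) (C : Matrix P M ℝ) (D : Matrix P P ℝ)
    [Invertible A] [Invertible D]
    [Invertible (A - B * D⁻¹ * C)] [Invertible (D - C * A⁻¹ * B)] :
    A * (A - B * D⁻¹ * C)⁻¹ - B * (D - C * A⁻¹ * B)⁻¹ * (C * A⁻¹) = 1 := by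
  rw [coop_schur_I2 A B C D]
  have h0 : A * ((A - B * D⁻¹ * C)⁻¹ * (B * D⁻¹)) * (C * A⁻¹)
      = A * (A - B * D⁻¹ * C)⁻¹ * (B * D⁻¹ * C * A⁻¹) := by simp only [Matrix.mul_assoc]
  rw [h0]
  have h2 : A * (A - B * D⁻¹ * C)⁻¹ - A * (A - B * D⁻¹ * C)⁻¹ * (B * D⁻¹ * C * A⁻¹)
      = A * (A - B * D⁻¹ * C)⁻¹ * ((A - B * D⁻¹ * C) * A⁻¹) := by
    rw [Matrix.sub_mul, Matrix.mul_sub, Matrix.mul_assoc A, Matrix.mul_inv_of_invertible,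
      Matrix.mul_one]
  rw [h2, Matrix.mul_assoc, Matrix.inv_mul_cancel_left_of_invertible,
    Matrix.mul_inv_of_invertible]

variable {A : Matrix M M ℝ} {B : Matrix M P ℝ} {D : Matrix P P ℝ}

lemma coop_posdef_A (hpd : (fromBlocks A B Bᵀ D).PosDef) : A.PosDef := by
  refine Matrix.PosDef.of_dotProduct_mulVec_pos ?_ ?_
  · have h := hpd.1
    rw [Matrix.IsHermitian, conjTranspose_eq_transpose_of_trivial] at h ⊢
    have := congrArg (fun X => Matrix.toBlocks₁₁ X) h
    simp [Matrix.toBlocks₁₁, fromBlocks_transpose, Matrix.toBlocks_fromBlocks₁₁,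
      Matrix.toBlocks_fromBlocks₂₂] at this
    exact this
  · intro x hx
    have h := hpd.dotProduct_mulVec_pos (x := Sum.elim x 0)
      (fun hc => hx (funext fun i => congrFun hc (Sum.inl i)))
    simpa [fromBlocks_mulVec, sumElim_dotProduct_sumElim] using h

lemma coop_posdef_D (hpd : (fromBlocks A B Bᵀ D).PosDef) : D.PosDef := by
  refine Matrix.PosDef.of_dotProduct_mulVec_pos ?_ ?_
  · have h := hpd.1
    rw [Matrix.IsHermitian, conjTranspose_eq_transpose_of_trivial] at h ⊢
    have := congrArg (fun X => Matrix.toBlocks₂₂ X) h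
    simp [Matrix.toBlocks₂₂, fromBlocks_transpose, Matrix.toBlocks_fromBlocks₁₁,
      Matrix.toBlocks_fromBlocks₂₂] at this
    exact this
  · intro y hy
    have h := hpd.dotProduct_mulVec_pos (x := Sum.elim 0 y)
      (fun hc => hy (funext fun i => congrFun hc (Sum.inr i)))
    simpa [fromBlocks_mulVec, sumElim_dotProduct_sumElim] using h

lemma coop_posdef_T (hpd : (fromBlocks A B Bᵀ D).PosDef) [Invertible A] :
    (D - Bᵀ * A⁻¹ * B).PosDef := by
  have hct : Bᴴ = Bᵀ := conjTranspose_eq_transpose_of_trivial B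
  have hA : A.PosDef := coop_posdef_A hpd
  refine Matrix.PosDef.of_dotProduct_mulVec_pos ?_ ?_
  · rw [← hct]
    exact (Matrix.IsHermitian.fromBlocks₁₁ B D hA.1).mp (by rw [hct]; exact hpd.1)
  · intro y hy
    have h := hpd.dotProduct_mulVec_pos (x := Sum.elim (-((A⁻¹ * B) *ᵥ y)) y)
      (fun hc => hy (funext fun i => congrFun hc (Sum.inr i)))
    rw [dotProduct_mulVec, ← hct] at h
    rw [schur_complement_eq₁₁ B D _ y hA.1] at h
    simp only [neg_add_cancel, star_zero, Matrix.zero_vecMul, zero_dotProduct, zero_add] at h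
    rwa [← dotProduct_mulVec, hct] at h

lemma coop_posdef_S (hpd : (fromBlocks A B Bᵀ D).PosDef) [Invertible D] :
    (A - B * D⁻¹ * Bᵀ).PosDef := by
  have hct : Bᴴ = Bᵀ := conjTranspose_eq_transpose_of_trivial B
  have hD : D.PosDef := coop_posdef_D hpd
  refine Matrix.PosDef.of_dotProduct_mulVec_pos ?_ ?_
  · rw [← hct]
    exact (Matrix.IsHermitian.fromBlocks₂₂ A B hD.1).mp (by rw [hct]; exact hpd.1)
  · intro x hx
    have h := hpd.dotProduct_mulVec_pos (x := Sum.elim x (-((D⁻¹ * Bᴴ) *ᵥ x)))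
      (fun hc => hx (funext fun i => congrFun hc (Sum.inl i)))
    rw [dotProduct_mulVec, ← hct] at h
    rw [schur_complement_eq₂₂ A B _ _ hD.1] at h
    simp only [neg_add_cancel, add_neg_cancel, star_zero, Matrix.zero_vecMul,
      zero_dotProduct, zero_add, add_zero] at h
    rwa [← dotProduct_mulVec, hct] at h

end CoopAux

/-- The joint (cooperative-game) quadratic in (δu, δv) with positive definite
block Hessian H = [[Q_uu, Q_uv],[Q_vu, Q_vv]] has a unique minimizer given by the
cooperative gains k̃, K̃, G̃, Ĩ, H̃, L̃. -/
theorem cooperative_game_unique_minimizer {m p n r : ℕ}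
    (Qu : Fin m → ℝ) (Qv : Fin p → ℝ)
    (Quu : Matrix (Fin m) (Fin m) ℝ) (Qvv : Matrix (Fin p) (Fin p) ℝ)
    (Quv : Matrix (Fin m) (Fin p) ℝ)
    (Qux : Matrix (Fin m) (Fin n) ℝ) (Quxr : Matrix (Fin m) (Fin r) ℝ)
    (Qvx : Matrix (Fin p) (Fin n) ℝ) (Qvxr : Matrix (Fin p) (Fin r) ℝ)
    (δx : Fin n → ℝ) (δxr : Fin r → ℝ)
    (hpd : (fromBlocks Quu Quv Quvᵀ Qvv).PosDef) :
    let H : Matrix (Fin m ⊕ Fin p) (Fin m ⊕ Fin p) ℝ := fromBlocks Quu Quv Quvᵀ Qvv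
    let f : (Fin m → ℝ) → (Fin p → ℝ) → ℝ := fun δu δv =>
      Qu ⬝ᵥ δu + Qv ⬝ᵥ δv
        + (1/2) * (Sum.elim δu δv ⬝ᵥ (H *ᵥ Sum.elim δu δv))
        + δu ⬝ᵥ (Qux *ᵥ δx + Quxr *ᵥ δxr)
        + δv ⬝ᵥ (Qvx *ᵥ δx + Qvxr *ᵥ δxr)
    let Qtuu := Quu - Quv * Qvv⁻¹ * Quvᵀ
    let Qtvv := Qvv - Quvᵀ * Quu⁻¹ * Quv
    let ktil : Fin m → ℝ := -(Qtuu⁻¹ *ᵥ (Qu - (Quv * Qvv⁻¹) *ᵥ Qv))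
    let Ktil := -(Qtuu⁻¹ * (Qux - Quv * Qvv⁻¹ * Qvx))
    let Gtil := -(Qtuu⁻¹ * (Quxr - Quv * Qvv⁻¹ * Qvxr))
    let Itil : Fin p → ℝ := -(Qtvv⁻¹ *ᵥ (Qv - (Quvᵀ * Quu⁻¹) *ᵥ Qu))
    let Htil := -(Qtvv⁻¹ * (Qvx - Quvᵀ * Quu⁻¹ * Qux))
    let Ltil := -(Qtvv⁻¹ * (Qvxr - Quvᵀ * Quu⁻¹ * Quxr))
    let δustar := ktil + Ktil *ᵥ δx + Gtil *ᵥ δxr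
    let δvstar := Itil + Htil *ᵥ δx + Ltil *ᵥ δxr
    ∀ (δu : Fin m → ℝ) (δv : Fin p → ℝ), (δu, δv) ≠ (δustar, δvstar) →
      f δustar δvstar < f δu δv := by
  intro H f Qtuu Qtvv ktil Ktil Gtil Itil Htil Ltil δustar δvstar δu δv hne
  have hA : Quu.PosDef := coop_posdef_A hpd
  have hD : Qvv.PosDef := coop_posdef_D hpd
  haveI : Invertible Quu := hA.isUnit.invertible
  haveI : Invertible Qvv := hD.isUnit.invertible
  have hS : (Quu - Quv * Qvv⁻¹ * Quvᵀ).PosDef := coop_posdef_S hpd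
  have hT : (Qvv - Quvᵀ * Quu⁻¹ * Quv).PosDef := coop_posdef_T hpd
  haveI : Invertible (Quu - Quv * Qvv⁻¹ * Quvᵀ) := hS.isUnit.invertible
  haveI : Invertible (Qvv - Quvᵀ * Quu⁻¹ * Quv) := hT.isUnit.invertible
  -- abbreviations (plain terms)
  have hustar : δustar = -((Quu - Quv * Qvv⁻¹ * Quvᵀ)⁻¹ *ᵥ
      ((Qu + (Qux *ᵥ δx + Quxr *ᵥ δxr))
        - (Quv * Qvv⁻¹) *ᵥ (Qv + (Qvx *ᵥ δx + Qvxr *ᵥ δxr)))) := by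
    show -(Qtuu⁻¹ *ᵥ (Qu - (Quv * Qvv⁻¹) *ᵥ Qv))
        + -(Qtuu⁻¹ * (Qux - Quv * Qvv⁻¹ * Qvx)) *ᵥ δx
        + -(Qtuu⁻¹ * (Quxr - Quv * Qvv⁻¹ * Qvxr)) *ᵥ δxr = _
    show -((Quu - Quv * Qvv⁻¹ * Quvᵀ)⁻¹ *ᵥ (Qu - (Quv * Qvv⁻¹) *ᵥ Qv))
        + -((Quu - Quv * Qvv⁻¹ * Quvᵀ)⁻¹ * (Qux - Quv * Qvv⁻¹ * Qvx)) *ᵥ δx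
        + -((Quu - Quv * Qvv⁻¹ * Quvᵀ)⁻¹ * (Quxr - Quv * Qvv⁻¹ * Qvxr)) *ᵥ δxr = _
    simp only [Matrix.neg_mulVec, Matrix.mulVec_sub, Matrix.mulVec_add,
      ← Matrix.mulVec_mulVec, Matrix.sub_mulVec, Matrix.add_mulVec]
    abel
  have hvstar : δvstar = -((Qvv - Quvᵀ * Quu⁻¹ * Quv)⁻¹ *ᵥ
      ((Qv + (Qvx *ᵥ δx + Qvxr *ᵥ δxr))
        - (Quvᵀ * Quu⁻¹) *ᵥ (Qu + (Qux *ᵥ δx + Quxr *ᵥ δxr)))) := by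
    show -(Qtvv⁻¹ *ᵥ (Qv - (Quvᵀ * Quu⁻¹) *ᵥ Qu))
        + -(Qtvv⁻¹ * (Qvx - Quvᵀ * Quu⁻¹ * Qux)) *ᵥ δx
        + -(Qtvv⁻¹ * (Qvxr - Quvᵀ * Quu⁻¹ * Quxr)) *ᵥ δxr = _
    show -((Qvv - Quvᵀ * Quu⁻¹ * Quv)⁻¹ *ᵥ (Qv - (Quvᵀ * Quu⁻¹) *ᵥ Qu))
        + -((Qvv - Quvᵀ * Quu⁻¹ * Quv)⁻¹ * (Qvx - Quvᵀ * Quu⁻¹ * Qux)) *ᵥ δx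
        + -((Qvv - Quvᵀ * Quu⁻¹ * Quv)⁻¹ * (Qvxr - Quvᵀ * Quu⁻¹ * Quxr)) *ᵥ δxr = _
    simp only [Matrix.neg_mulVec, Matrix.mulVec_sub, Matrix.mulVec_add,
      ← Matrix.mulVec_mulVec, Matrix.sub_mulVec, Matrix.add_mulVec]
    abel
  -- block stationarity equations
  have i1 := coop_schur_I1 Quu Quv Quvᵀ Qvv
  have i2 := coop_schur_I2 Quu Quv Quvᵀ Qvv
  have i1' := coop_schur_I1 Qvv Quvᵀ Quv Quu
  have i2' := coop_schur_I2 Qvv Quvᵀ Quv Quu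
  have e1 : Quu *ᵥ δustar + Quv *ᵥ δvstar = -(Qu + (Qux *ᵥ δx + Quxr *ᵥ δxr)) := by
    rw [hustar, hvstar]
    have expand : Quu *ᵥ (-((Quu - Quv * Qvv⁻¹ * Quvᵀ)⁻¹ *ᵥ
          ((Qu + (Qux *ᵥ δx + Quxr *ᵥ δxr))
            - (Quv * Qvv⁻¹) *ᵥ (Qv + (Qvx *ᵥ δx + Qvxr *ᵥ δxr)))))
        + Quv *ᵥ (-((Qvv - Quvᵀ * Quu⁻¹ * Quv)⁻¹ *ᵥ
          ((Qv + (Qvx *ᵥ δx + Qvxr *ᵥ δxr))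
            - (Quvᵀ * Quu⁻¹) *ᵥ (Qu + (Qux *ᵥ δx + Quxr *ᵥ δxr)))))
        = -(((Quu * (Quu - Quv * Qvv⁻¹ * Quvᵀ)⁻¹
              - Quv * (Qvv - Quvᵀ * Quu⁻¹ * Quv)⁻¹ * (Quvᵀ * Quu⁻¹))
                *ᵥ (Qu + (Qux *ᵥ δx + Quxr *ᵥ δxr)))
            + ((Quv * (Qvv - Quvᵀ * Quu⁻¹ * Quv)⁻¹
              - Quu * ((Quu - Quv * Qvv⁻¹ * Quvᵀ)⁻¹ * (Quv * Qvv⁻¹)))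
                *ᵥ (Qv + (Qvx *ᵥ δx + Qvxr *ᵥ δxr)))) := by
      simp only [Matrix.mulVec_neg, Matrix.mulVec_sub, Matrix.mulVec_add,
        ← Matrix.mulVec_mulVec, Matrix.sub_mulVec, Matrix.add_mulVec]
      abel
    rw [expand, i1, show Quv * (Qvv - Quvᵀ * Quu⁻¹ * Quv)⁻¹
        - Quu * ((Quu - Quv * Qvv⁻¹ * Quvᵀ)⁻¹ * (Quv * Qvv⁻¹)) = 0 by rw [i2, sub_self]]
    simp [Matrix.one_mulVec, Matrix.zero_mulVec]
  have e2 : Quvᵀ *ᵥ δustar + Qvv *ᵥ δvstar = -(Qv + (Qvx *ᵥ δx + Qvxr *ᵥ δxr)) := by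
    rw [hustar, hvstar]
    have expand : Quvᵀ *ᵥ (-((Quu - Quv * Qvv⁻¹ * Quvᵀ)⁻¹ *ᵥ
          ((Qu + (Qux *ᵥ δx + Quxr *ᵥ δxr))
            - (Quv * Qvv⁻¹) *ᵥ (Qv + (Qvx *ᵥ δx + Qvxr *ᵥ δxr)))))
        + Qvv *ᵥ (-((Qvv - Quvᵀ * Quu⁻¹ * Quv)⁻¹ *ᵥ
          ((Qv + (Qvx *ᵥ δx + Qvxr *ᵥ δxr))
            - (Quvᵀ * Quu⁻¹) *ᵥ (Qu + (Qux *ᵥ δx + Quxr *ᵥ δxr)))))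
        = -(((Qvv * (Qvv - Quvᵀ * Quu⁻¹ * Quv)⁻¹
              - Quvᵀ * (Quu - Quv * Qvv⁻¹ * Quvᵀ)⁻¹ * (Quv * Qvv⁻¹))
                *ᵥ (Qv + (Qvx *ᵥ δx + Qvxr *ᵥ δxr)))
            + ((Quvᵀ * (Quu - Quv * Qvv⁻¹ * Quvᵀ)⁻¹
              - Qvv * ((Qvv - Quvᵀ * Quu⁻¹ * Quv)⁻¹ * (Quvᵀ * Quu⁻¹)))
                *ᵥ (Qu + (Qux *ᵥ δx + Quxr *ᵥ δxr)))) := by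
      simp only [Matrix.mulVec_neg, Matrix.mulVec_sub, Matrix.mulVec_add,
        ← Matrix.mulVec_mulVec, Matrix.sub_mulVec, Matrix.add_mulVec]
      abel
    rw [expand, i1', show Quvᵀ * (Quu - Quv * Qvv⁻¹ * Quvᵀ)⁻¹
        - Qvv * ((Qvv - Quvᵀ * Quu⁻¹ * Quv)⁻¹ * (Quvᵀ * Quu⁻¹)) = 0 by rw [i2', sub_self]]
    simp [Matrix.one_mulVec, Matrix.zero_mulVec]
  -- key stationarity in block form
  have key : (fromBlocks Quu Quv Quvᵀ Qvv) *ᵥ Sum.elim δustar δvstar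
      = -(Sum.elim (Qu + (Qux *ᵥ δx + Quxr *ᵥ δxr)) (Qv + (Qvx *ᵥ δx + Qvxr *ᵥ δxr))) := by
    rw [fromBlocks_mulVec]
    funext i
    cases i with
    | inl i => simpa using congrFun e1 i
    | inr j => simpa using congrFun e2 j
  -- rewrite f in standard quadratic form
  have hf : ∀ u v, f u v
      = Sum.elim (Qu + (Qux *ᵥ δx + Quxr *ᵥ δxr)) (Qv + (Qvx *ᵥ δx + Qvxr *ᵥ δxr))
          ⬝ᵥ Sum.elim u v
        + (1/2) * (Sum.elim u v ⬝ᵥ ((fromBlocks Quu Quv Quvᵀ Qvv) *ᵥ Sum.elim u v)) := by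
    intro u v
    show Qu ⬝ᵥ u + Qv ⬝ᵥ v
        + (1/2) * (Sum.elim u v ⬝ᵥ ((fromBlocks Quu Quv Quvᵀ Qvv) *ᵥ Sum.elim u v))
        + u ⬝ᵥ (Qux *ᵥ δx + Quxr *ᵥ δxr)
        + v ⬝ᵥ (Qvx *ᵥ δx + Qvxr *ᵥ δxr) = _
    rw [sumElim_dotProduct_sumElim, add_dotProduct, add_dotProduct,
      dotProduct_comm u, dotProduct_comm v]
    simp only [add_dotProduct]
    ring
  have hzne : Sum.elim δu δv ≠ Sum.elim δustar δvstar := by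
    intro h
    exact hne (Prod.ext (funext fun i => congrFun h (Sum.inl i))
      (funext fun j => congrFun h (Sum.inr j)))
  rw [hf, hf]
  exact coop_quad_strict_min hpd _ _ _ key hzne
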